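/- Let N ≥ 4, T ≥ 1, and K ≥ N − 1, and let data points x₁ < x₂ < ⋯ < x_N in ℝ and labels y₁, …, y_N ∈ ℝ^T be given. Suppose there exists i ∈ {2, …, N−2} such that the vectors s_i − s_{i−1} and s_{i+1} − s_i are both nonzero and aligned. Then the set of functions {f_θ : θ attains the minimum of problem (P)} is infinite; in particular, the solution to problem (P) is non-unique. -/

import Mathlib

/-!
Shallow univariate (input dimension 1) ReLU networks with `T` outputs,
width `K`, input weights `w k ∈ {−1, +1}`, and a residual connection.
-/

open scoped BigOperators
open Finset

noncomputable section

/-- Parameters of a width-`K`, `T`-output shallow ReLU network with residual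
connection, whose input weights are constrained to `{−1, +1}`. -/
structure ReLUParams (T K : ℕ) where
  v : Fin K → EuclideanSpace ℝ (Fin T)
  w : Fin K → ℝ
  b : Fin K → ℝ
  A : EuclideanSpace ℝ (Fin T)
  c : EuclideanSpace ℝ (Fin T)
  hw : ∀ k, w k = 1 ∨ w k = -1

/-- The network function `f_θ(x) = ∑ₖ vₖ (wₖ x + bₖ)₊ + A x + c`. -/
def nnFun {T K : ℕ} (θ : ReLUParams T K) (x : ℝ) : EuclideanSpace ℝ (Fin T) :=
  (∑ k : Fin K, max (θ.w k * x + θ.b k) 0 • θ.v k) + x • θ.A + θ.c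

/-- The objective of problem (P): `∑ₖ ‖vₖ‖₂`. -/
def cost {T K : ℕ} (θ : ReLUParams T K) : ℝ := ∑ k : Fin K, ‖θ.v k‖

/-- Slope vector `sᵢ = (y_{i+1} − yᵢ)/(x_{i+1} − xᵢ)` (0-indexed). -/
def slopeVec {T : ℕ} (x : ℕ → ℝ) (y : ℕ → EuclideanSpace ℝ (Fin T)) (i : ℕ) :
    EuclideanSpace ℝ (Fin T) :=
  (x (i + 1) - x i)⁻¹ • (y (i + 1) - y i)

/-- The connect-the-dots interpolant `f_D` of the data
`(x 0, y 0), …, (x (N-1), y (N-1))` (0-indexed): it interpolates the data, is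
affine on each interval `[xᵢ, x_{i+1}]`, is affine with slopeVec `s 0` on
`(−∞, x 0]` and affine with slopeVec `s (N-2)` on `[x (N-1), ∞)`. -/
def ctd {T : ℕ} (N : ℕ) (x : ℕ → ℝ) (y : ℕ → EuclideanSpace ℝ (Fin T)) (t : ℝ) :
    EuclideanSpace ℝ (Fin T) :=
  y 0 + (t - x 0) • slopeVec x y 0 +
    ∑ i ∈ Finset.Ico 1 (N - 1), max (t - x i) 0 • (slopeVec x y i - slopeVec x y (i - 1))

/-- Feasibility for problem (P): the network interpolates the data. -/
def Interpolates {T K : ℕ} (N : ℕ) (x : ℕ → ℝ) (y : ℕ → EuclideanSpace ℝ (Fin T))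
    (θ : ReLUParams T K) : Prop :=
  ∀ i < N, nnFun θ (x i) = y i

/-- `θ` attains the minimum of problem (P). -/
def IsMinimizer {T K : ℕ} (N : ℕ) (x : ℕ → ℝ) (y : ℕ → EuclideanSpace ℝ (Fin T))
    (θ : ReLUParams T K) : Prop :=
  Interpolates N x y θ ∧ ∀ θ' : ReLUParams T K, Interpolates N x y θ' → cost θ ≤ cost θ'

/-- Two vectors `u₁, u₂ ∈ ℝ^T` are aligned if `⟪u₁, u₂⟫ = ‖u₁‖₂ ‖u₂‖₂`. -/
def Aligned {T : ℕ} (u₁ u₂ : EuclideanSpace ℝ (Fin T)) : Prop :=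
  (inner ℝ u₁ u₂ : ℝ) = ‖u₁‖ * ‖u₂‖


lemma max_sub_max_bounds (A B : ℝ) :
    min (A - B) 0 ≤ max A 0 - max B 0 ∧ max A 0 - max B 0 ≤ max (A - B) 0 := by
  constructor <;>
  · simp only [max_def, min_def]
    split_ifs <;> linarith

lemma relu_convexOn (w b : ℝ) : ConvexOn ℝ Set.univ (fun t : ℝ => max (w * t + b) 0) := by
  have h1 : ConvexOn ℝ Set.univ (fun t : ℝ => w * t + b) := by
    refine ⟨convex_univ, ?_⟩
    intro p _ q _ a a' ha ha' haa
    simp only [smul_eq_mul]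
    have : a = 1 - a' := by linarith
    subst this
    apply le_of_eq; ring
  exact h1.sup (convexOn_const 0 convex_univ)

lemma relu_slope_mono (w b : ℝ) {p q r : ℝ} (hpq : p < q) (hqr : q < r) :
    (q - p)⁻¹ * (max (w * q + b) 0 - max (w * p + b) 0) ≤
      (r - q)⁻¹ * (max (w * r + b) 0 - max (w * q + b) 0) := by
  have h := (relu_convexOn w b).slope_mono_adjacent (Set.mem_univ p) (Set.mem_univ r) hpq hqr
  simp only [div_eq_inv_mul] at h
  exact h

lemma relu_slope_mem (w b : ℝ) {p q : ℝ} (hpq : p < q) :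
    min w 0 ≤ (q - p)⁻¹ * (max (w * q + b) 0 - max (w * p + b) 0) ∧
    (q - p)⁻¹ * (max (w * q + b) 0 - max (w * p + b) 0) ≤ max w 0 := by
  have hd : (0:ℝ) < q - p := by linarith
  have hAB : w * q + b - (w * p + b) = w * (q - p) := by ring
  obtain ⟨hlo, hhi⟩ := max_sub_max_bounds (w * q + b) (w * p + b)
  rw [hAB] at hlo hhi
  constructor
  · rw [le_inv_mul_iff₀ hd]
    refine le_trans (le_of_eq ?_) hlo
    simp only [max_def, min_def]
    split_ifs <;> nlinarith
  · rw [inv_mul_le_iff₀ hd]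
    refine le_trans hhi (le_of_eq ?_)
    simp only [max_def, min_def]
    split_ifs <;> nlinarith

lemma tv_bound (σ : ℕ → ℝ) (M : ℕ) (hmono : ∀ i, i + 1 ≤ M → σ i ≤ σ (i + 1))
    (hrange : σ M - σ 0 ≤ 1) :
    ∑ i ∈ Finset.Ico 1 (M + 1), |σ i - σ (i - 1)| ≤ 1 := by
  have h1 : ∑ i ∈ Finset.Ico 1 (M + 1), |σ i - σ (i - 1)|
      = ∑ i ∈ Finset.Ico 1 (M + 1), (σ i - σ (i - 1)) := by
    refine Finset.sum_congr rfl fun i hi => ?_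
    simp only [Finset.mem_Ico] at hi
    have h2 := hmono (i - 1) (by omega)
    rw [show i - 1 + 1 = i from by omega] at h2
    exact abs_of_nonneg (by linarith)
  rw [h1, Finset.sum_Ico_eq_sum_range]
  simp only [Nat.add_sub_cancel]
  have h3 : ∀ i, σ (1 + i) - σ (1 + i - 1) = σ (i + 1) - σ i := by
    intro i
    rw [show 1 + i = i + 1 from by omega, show i + 1 - 1 = i from by omega]
  rw [Finset.sum_congr rfl fun i _ => h3 i, Finset.sum_range_sub]
  exact hrange

lemma x_mono {N : ℕ} (x : ℕ → ℝ) (hx : ∀ i, i + 1 < N → x i < x (i + 1)) :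
    ∀ a b, a ≤ b → b < N → x a ≤ x b := by
  intro a b hab hb
  induction b with
  | zero => have : a = 0 := by omega
            simp [this]
  | succ n ih =>
    rcases Nat.lt_or_ge a (n + 1) with h | h
    · exact le_trans (ih (by omega) (by omega)) (le_of_lt (hx n hb))
    · have : a = n + 1 := by omega
      simp [this]

lemma sum_Ico_shift {α : Type*} [AddCommMonoid α] (f : ℕ → α) (n : ℕ) :
    ∑ i ∈ Finset.Ico 1 (n + 1), f i = ∑ j ∈ Finset.range n, f (j + 1) := by
  rw [Finset.sum_Ico_eq_sum_range]
  simp only [Nat.add_sub_cancel]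
  exact Finset.sum_congr rfl fun j _ => by rw [Nat.add_comm]

lemma slope_telescope {T : ℕ} (x : ℕ → ℝ) (y : ℕ → EuclideanSpace ℝ (Fin T)) (l : ℕ) :
    (∑ i ∈ Finset.Ico 1 (l + 1), (slopeVec x y i - slopeVec x y (i - 1)))
      = slopeVec x y l - slopeVec x y 0 := by
  rw [sum_Ico_shift (fun i => slopeVec x y i - slopeVec x y (i - 1)) l]
  simp only [Nat.add_sub_cancel]
  exact Finset.sum_range_sub (fun i => slopeVec x y i) l

lemma ctd_interp {T N : ℕ} (hN : 2 ≤ N) (x : ℕ → ℝ) (y : ℕ → EuclideanSpace ℝ (Fin T))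
    (hx : ∀ i, i + 1 < N → x i < x (i + 1)) :
    ∀ l, l < N → ctd N x y (x l) = y l := by
  have hxm := x_mono x hx
  have hS : ∀ r, r < N →
      (∑ i ∈ Finset.Ico 1 (N - 1),
          max (x r - x i) 0 • (slopeVec x y i - slopeVec x y (i - 1)))
        = ∑ i ∈ Finset.Ico 1 r, (x r - x i) • (slopeVec x y i - slopeVec x y (i - 1)) := by
    intro r hr
    have hsub : Finset.Ico 1 r ⊆ Finset.Ico 1 (N - 1) :=
      Finset.Ico_subset_Ico_right (by omega)
    have hzero : ∀ i ∈ Finset.Ico 1 (N - 1), i ∉ Finset.Ico 1 r →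
        max (x r - x i) 0 • (slopeVec x y i - slopeVec x y (i - 1)) = 0 := by
      intro i hi hni
      simp only [Finset.mem_Ico] at hi hni
      have : x r ≤ x i := hxm r i (by omega) (by omega)
      rw [max_eq_right (by linarith), zero_smul]
    calc (∑ i ∈ Finset.Ico 1 (N - 1),
            max (x r - x i) 0 • (slopeVec x y i - slopeVec x y (i - 1)))
        = ∑ i ∈ Finset.Ico 1 r,
            max (x r - x i) 0 • (slopeVec x y i - slopeVec x y (i - 1)) :=
          (Finset.sum_subset hsub hzero).symm
      _ = _ := by
          refine Finset.sum_congr rfl fun i hi => ?_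
          simp only [Finset.mem_Ico] at hi
          have : x i ≤ x r := hxm i r (by omega) hr
          rw [max_eq_left (by linarith)]
  intro l hl
  induction l with
  | zero =>
    simp only [ctd]
    rw [hS 0 hl]
    simp
  | succ n ih =>
    have hn : n < N := by omega
    have hdn : x n < x (n + 1) := hx n hl
    have ihn := ih hn
    simp only [ctd] at ihn ⊢
    rw [hS n hn] at ihn
    rw [hS (n + 1) hl]
    have hyn : (x (n + 1) - x n) • slopeVec x y n = y (n + 1) - y n := by
      rw [slopeVec, smul_smul, mul_inv_cancel₀ (by linarith), one_smul]
    have hyn' : y (n + 1) = y n + (x (n + 1) - x n) • slopeVec x y n := by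
      rw [hyn]; abel
    have htel := slope_telescope x y n
    rcases Nat.eq_zero_or_pos n with h0 | hpos
    · subst h0
      rw [show Finset.Ico 1 1 = ∅ from rfl]
      simp only [Finset.sum_empty]
      rw [hyn', ← ihn]
      rw [show Finset.Ico 1 0 = ∅ from rfl]
      simp only [Finset.sum_empty]
      module
    · have hsplit : (∑ i ∈ Finset.Ico 1 (n + 1),
          (x (n + 1) - x i) • (slopeVec x y i - slopeVec x y (i - 1)))
          = (∑ i ∈ Finset.Ico 1 n, (x n - x i) • (slopeVec x y i - slopeVec x y (i - 1)))
            + (x (n + 1) - x n) • (slopeVec x y n - slopeVec x y 0) := by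
        have e1 : ∀ i, (x (n + 1) - x i) • (slopeVec x y i - slopeVec x y (i - 1))
            = (x n - x i) • (slopeVec x y i - slopeVec x y (i - 1))
              + (x (n + 1) - x n) • (slopeVec x y i - slopeVec x y (i - 1)) := by
          intro i
          rw [← add_smul]
          congr 1
          ring
        rw [Finset.sum_congr rfl (fun i _ => e1 i), Finset.sum_add_distrib,
          ← Finset.smul_sum, htel]
        congr 1
        rw [Finset.sum_Ico_succ_top (by omega : 1 ≤ n), sub_self, zero_smul, add_zero]
      rw [hsplit]
      have hsum : (∑ i ∈ Finset.Ico 1 n, (x n - x i) • (slopeVec x y i - slopeVec x y (i - 1)))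
          = y n - y 0 - (x n - x 0) • slopeVec x y 0 := by
        rw [← ihn]; abel
      rw [hsum, hyn']
      module

lemma cost_lower_bound {T K N : ℕ} (hN : 2 ≤ N) (x : ℕ → ℝ)
    (y : ℕ → EuclideanSpace ℝ (Fin T))
    (hx : ∀ i, i + 1 < N → x i < x (i + 1)) (θ : ReLUParams T K)
    (hint : Interpolates N x y θ) :
    ∑ i ∈ Finset.Ico 1 (N - 1), ‖slopeVec x y i - slopeVec x y (i - 1)‖ ≤ cost θ := by
  classical
  set σ : Fin K → ℕ → ℝ := fun k i =>
    (x (i + 1) - x i)⁻¹ *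
      (max (θ.w k * x (i + 1) + θ.b k) 0 - max (θ.w k * x i + θ.b k) 0) with hσ
  have hslope : ∀ i, i + 1 < N →
      slopeVec x y i = (∑ k, σ k i • θ.v k) + θ.A := by
    intro i hi
    have hd : (0:ℝ) < x (i + 1) - x i := by have := hx i hi; linarith
    have h1 : y (i + 1) = nnFun θ (x (i + 1)) := (hint _ hi).symm
    have h2 : y i = nnFun θ (x i) := (hint _ (by omega)).symm
    have expand : y (i + 1) - y i
        = (∑ k, (max (θ.w k * x (i + 1) + θ.b k) 0 - max (θ.w k * x i + θ.b k) 0) • θ.v k)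
          + (x (i + 1) - x i) • θ.A := by
      rw [h1, h2, nnFun, nnFun]
      simp only [sub_smul]
      rw [Finset.sum_sub_distrib]
      abel
    rw [slopeVec, expand, smul_add, Finset.smul_sum]
    congr 1
    · refine Finset.sum_congr rfl fun k _ => ?_
      rw [smul_smul, hσ]
    · rw [smul_smul, inv_mul_cancel₀ hd.ne', one_smul]
  have hdiff : ∀ i ∈ Finset.Ico 1 (N - 1),
      slopeVec x y i - slopeVec x y (i - 1) = ∑ k, (σ k i - σ k (i - 1)) • θ.v k := by
    intro i hi
    simp only [Finset.mem_Ico] at hi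
    have e1 := hslope i (by omega)
    have e2 := hslope (i - 1) (by omega)
    rw [e1, e2]
    simp only [sub_smul]
    rw [Finset.sum_sub_distrib]
    abel
  have hbound : ∀ i ∈ Finset.Ico 1 (N - 1),
      ‖slopeVec x y i - slopeVec x y (i - 1)‖ ≤ ∑ k, |σ k i - σ k (i - 1)| * ‖θ.v k‖ := by
    intro i hi
    rw [hdiff i hi]
    refine le_trans (norm_sum_le _ _) (Finset.sum_le_sum fun k _ => ?_)
    rw [norm_smul, Real.norm_eq_abs]
  refine le_trans (Finset.sum_le_sum hbound) ?_
  rw [Finset.sum_comm]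
  rw [cost]
  refine Finset.sum_le_sum fun k _ => ?_
  rw [← Finset.sum_mul]
  have h1 : ∑ i ∈ Finset.Ico 1 (N - 1), |σ k i - σ k (i - 1)| ≤ 1 := by
    rw [show N - 1 = (N - 2) + 1 from by omega]
    apply tv_bound
    · intro i hi
      have := relu_slope_mono (θ.w k) (θ.b k) (hx i (by omega)) (hx (i + 1) (by omega))
      simpa [hσ] using this
    · have h0 := relu_slope_mem (θ.w k) (θ.b k) (hx 0 (by omega))
      have h1' := relu_slope_mem (θ.w k) (θ.b k) (hx (N - 2) (by omega))
      have hminmax : (θ.w k ⊔ 0) - (θ.w k ⊓ 0) = 1 := by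
        rcases θ.hw k with hw | hw <;> rw [hw] <;>
          norm_num [max_def, min_def]
      simp only [hσ]
      linarith [h0.1, h1'.2]
  calc (∑ i ∈ Finset.Ico 1 (N - 1), |σ k i - σ k (i - 1)|) * ‖θ.v k‖
      ≤ 1 * ‖θ.v k‖ := mul_le_mul_of_nonneg_right h1 (norm_nonneg _)
    _ = ‖θ.v k‖ := one_mul _

/-- If for some (1-indexed) `i ∈ {2, …, N−2}` the vectors
`sᵢ − s_{i−1}` and `s_{i+1} − sᵢ` are both nonzero and aligned (0-indexed:
some `i` with `1 ≤ i` and `i + 3 ≤ N`), then the set of functions represented by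
parameter sets attaining the minimum of problem (P) is infinite; in particular,
the solution to problem (P) is non-unique. -/
theorem nonunique_solutions {T K N : ℕ} (hT : 1 ≤ T) (hN : 4 ≤ N) (hK : N - 1 ≤ K)
    (x : ℕ → ℝ) (y : ℕ → EuclideanSpace ℝ (Fin T))
    (hx : ∀ i, i + 1 < N → x i < x (i + 1))
    (hcond : ∃ i : ℕ, 1 ≤ i ∧ i + 3 ≤ N ∧
      slopeVec x y i - slopeVec x y (i - 1) ≠ 0 ∧
      slopeVec x y (i + 1) - slopeVec x y i ≠ 0 ∧
      Aligned (slopeVec x y i - slopeVec x y (i - 1))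
        (slopeVec x y (i + 1) - slopeVec x y i)) :
    {f : ℝ → EuclideanSpace ℝ (Fin T) |
      ∃ θ : ReLUParams T K, IsMinimizer N x y θ ∧ f = nnFun θ}.Infinite := by
  classical
  obtain ⟨i₀, hi1, hi3, hd1, hd2, halign⟩ := hcond
  have hxm := x_mono x hx
  have hio : x i₀ < x (i₀ + 1) := hx i₀ (by omega)
  set n₁ : ℝ := ‖slopeVec x y i₀ - slopeVec x y (i₀ - 1)‖ with hn₁def
  set n₂ : ℝ := ‖slopeVec x y (i₀ + 1) - slopeVec x y i₀‖ with hn₂def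
  have hn₁ : 0 < n₁ := norm_pos_iff.mpr hd1
  have hn₂ : 0 < n₂ := norm_pos_iff.mpr hd2
  set u : EuclideanSpace ℝ (Fin T) := n₁⁻¹ • (slopeVec x y i₀ - slopeVec x y (i₀ - 1)) with hudef
  have hu : ‖u‖ = 1 := by
    rw [hudef, norm_smul, Real.norm_eq_abs, abs_of_nonneg (inv_nonneg.mpr hn₁.le),
      ← hn₁def, inv_mul_cancel₀ hn₁.ne']
  have hδ1u : slopeVec x y i₀ - slopeVec x y (i₀ - 1) = n₁ • u := by
    rw [hudef, smul_inv_smul₀ hn₁.ne']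
  have hδ2u : slopeVec x y (i₀ + 1) - slopeVec x y i₀ = n₂ • u := by
    have h := (inner_eq_norm_mul_iff_real).1 halign
    rw [← hn₁def, ← hn₂def] at h
    calc slopeVec x y (i₀ + 1) - slopeVec x y i₀
        = n₁⁻¹ • (n₁ • (slopeVec x y (i₀ + 1) - slopeVec x y i₀)) :=
          (inv_smul_smul₀ hn₁.ne' _).symm
      _ = n₁⁻¹ • (n₂ • (slopeVec x y i₀ - slopeVec x y (i₀ - 1))) := by rw [← h]
      _ = n₂ • (n₁⁻¹ • (slopeVec x y i₀ - slopeVec x y (i₀ - 1))) := smul_comm _ _ _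
      _ = n₂ • u := by rw [← hudef]
  set m : ℝ := (x i₀ + x (i₀ + 1)) / 2 with hmdef
  have hm1 : x i₀ < m := by rw [hmdef]; linarith
  have hm2 : m < x (i₀ + 1) := by rw [hmdef]; linarith
  set ε₀ : ℝ := min n₁ n₂ with hε₀def
  have hε₀ : 0 < ε₀ := lt_min hn₁ hn₂
  set vf : ℝ → ℕ → EuclideanSpace ℝ (Fin T) := fun ε j =>
    if j < N - 2 then
      (slopeVec x y (j + 1) - slopeVec x y j)
        - (if j = i₀ - 1 then ε • u else 0) - (if j = i₀ then ε • u else 0)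
    else if j = N - 2 then (2 * ε) • u else 0 with hvf
  set bf : ℕ → ℝ := fun j =>
    if j < N - 2 then -x (j + 1) else if j = N - 2 then -m else 0 with hbf
  set Θ : ℝ → ReLUParams T K := fun ε =>
    { v := fun k => vf ε k.val
      w := fun _ => 1
      b := fun k => bf k.val
      A := slopeVec x y 0
      c := y 0 - x 0 • slopeVec x y 0
      hw := fun _ => Or.inl rfl } with hΘ
  -- evaluation of the network
  have heval : ∀ ε t, nnFun (Θ ε) t
      = ctd N x y t +
        (2 * ε * max (t - m) 0 - ε * max (t - x i₀) 0 - ε * max (t - x (i₀ + 1)) 0) • u := by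
    intro ε t
    rw [nnFun, ctd]
    simp only [hΘ]
    rw [Fin.sum_univ_eq_sum_range (fun j => max (1 * t + bf j) 0 • vf ε j) K]
    rw [Finset.range_eq_Ico, ← Finset.sum_Ico_consecutive _ (Nat.zero_le (N - 1)) hK]
    have htail : ∑ j ∈ Finset.Ico (N - 1) K, max (1 * t + bf j) 0 • vf ε j = 0 := by
      refine Finset.sum_eq_zero fun j hj => ?_
      simp only [Finset.mem_Ico] at hj
      have e1 : ¬(j < N - 2) := by omega
      have e2 : j ≠ N - 2 := by omega
      simp [hvf, e1, e2]
    rw [htail, add_zero, ← Finset.range_eq_Ico, show N - 1 = (N - 2) + 1 from by omega,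
      Finset.sum_range_succ]
    have hmid : max (1 * t + bf (N - 2)) 0 • vf ε (N - 2) = (2 * ε * max (t - m) 0) • u := by
      have e1 : ¬(N - 2 < N - 2) := by omega
      simp only [hvf, hbf, e1, if_false, if_true]
      rw [show 1 * t + -m = t - m from by ring, smul_smul, mul_comm (max (t-m) 0) (2*ε)]
    rw [hmid]
    have hstep : ∀ j ∈ Finset.range (N - 2), max (1 * t + bf j) 0 • vf ε j
        = max (t - x (j + 1)) 0 • (slopeVec x y (j + 1) - slopeVec x y j)
          - (if j = i₀ - 1 then (ε * max (t - x (j + 1)) 0) • u else 0)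
          - (if j = i₀ then (ε * max (t - x (j + 1)) 0) • u else 0) := by
      intro j hj
      simp only [Finset.mem_range] at hj
      simp only [hvf, hbf, if_pos hj]
      rw [show 1 * t + -x (j + 1) = t - x (j + 1) from by ring, smul_sub, smul_sub]
      congr 1
      · congr 1
        split_ifs with h
        · rw [smul_smul, mul_comm]
        · exact smul_zero _
      · split_ifs with h
        · rw [smul_smul, mul_comm]
        · exact smul_zero _
    rw [Finset.sum_congr rfl hstep, Finset.sum_sub_distrib, Finset.sum_sub_distrib]
    have hre : ∑ j ∈ Finset.range (N - 2),
        max (t - x (j + 1)) 0 • (slopeVec x y (j + 1) - slopeVec x y j)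
        = ∑ i ∈ Finset.Ico 1 (N - 1),
            max (t - x i) 0 • (slopeVec x y i - slopeVec x y (i - 1)) := by
      rw [show N - 1 = (N - 2) + 1 from by omega,
        sum_Ico_shift (fun i => max (t - x i) 0 • (slopeVec x y i - slopeVec x y (i - 1)))]
      exact Finset.sum_congr rfl fun j _ => by simp only [Nat.add_sub_cancel]
    rw [hre]
    rw [Finset.sum_ite_eq' (Finset.range (N - 2)) (i₀ - 1)
        (fun j => (ε * max (t - x (j + 1)) 0) • u),
      Finset.sum_ite_eq' (Finset.range (N - 2)) i₀
        (fun j => (ε * max (t - x (j + 1)) 0) • u),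
      if_pos (Finset.mem_range.mpr (by omega : i₀ - 1 < N - 2)),
      if_pos (Finset.mem_range.mpr (by omega : i₀ < N - 2)),
      show i₀ - 1 + 1 = i₀ from by omega]
    rw [show N - 2 + 1 = N - 1 from by omega]
    module
  -- interpolation
  have hctd := ctd_interp (by omega) x y hx
  have hinterp : ∀ ε : ℝ, Interpolates N x y (Θ ε) := by
    intro ε l hl
    rw [heval ε (x l), hctd l hl]
    rcases le_or_gt l i₀ with h | h
    · have h1 : x l ≤ x i₀ := hxm l i₀ h (by omega)
      rw [max_eq_right (by linarith : x l - x i₀ ≤ 0),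
        max_eq_right (by linarith : x l - m ≤ 0),
        max_eq_right (by linarith : x l - x (i₀ + 1) ≤ 0)]
      simp
    · have h1 : x (i₀ + 1) ≤ x l := hxm (i₀ + 1) l h hl
      rw [max_eq_left (by linarith : (0:ℝ) ≤ x l - x i₀),
        max_eq_left (by linarith : (0:ℝ) ≤ x l - m),
        max_eq_left (by linarith : (0:ℝ) ≤ x l - x (i₀ + 1)),
        show 2 * ε * (x l - m) - ε * (x l - x i₀) - ε * (x l - x (i₀ + 1)) = 0 from by
          rw [hmdef]; ring,
        zero_smul, add_zero]
  -- cost computation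
  have hkey : ∀ (z : EuclideanSpace ℝ (Fin T)) (c : ℝ), 0 ≤ c → c ≤ ‖z‖ → z = ‖z‖ • u →
      ‖z - c • u‖ = ‖z‖ - c := by
    intro z c hc hcz hzu
    have h2 : z - c • u = (‖z‖ - c) • u := by rw [sub_smul, ← hzu]
    rw [h2, norm_smul, Real.norm_eq_abs, hu, mul_one, abs_of_nonneg (by linarith)]
  have hcost : ∀ ε : ℝ, 0 ≤ ε → ε ≤ ε₀ → cost (Θ ε)
      = ∑ i ∈ Finset.Ico 1 (N - 1), ‖slopeVec x y i - slopeVec x y (i - 1)‖ := by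
    intro ε h0 h1
    have hε1 : ε ≤ n₁ := le_trans h1 (min_le_left _ _)
    have hε2 : ε ≤ n₂ := le_trans h1 (min_le_right _ _)
    rw [cost]
    simp only [hΘ]
    rw [Fin.sum_univ_eq_sum_range (fun j => ‖vf ε j‖) K]
    rw [Finset.range_eq_Ico, ← Finset.sum_Ico_consecutive _ (Nat.zero_le (N - 1)) hK]
    have htail : ∑ j ∈ Finset.Ico (N - 1) K, ‖vf ε j‖ = 0 := by
      refine Finset.sum_eq_zero fun j hj => ?_
      simp only [Finset.mem_Ico] at hj
      have e1 : ¬(j < N - 2) := by omega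
      have e2 : j ≠ N - 2 := by omega
      simp [hvf, e1, e2]
    rw [htail, add_zero, ← Finset.range_eq_Ico, show N - 1 = (N - 2) + 1 from by omega,
      Finset.sum_range_succ]
    have hmid : ‖vf ε (N - 2)‖ = 2 * ε := by
      have e1 : ¬(N - 2 < N - 2) := by omega
      simp only [hvf, e1, if_false, if_true]
      rw [norm_smul, Real.norm_eq_abs, hu, mul_one, abs_of_nonneg (by linarith)]
    rw [hmid]
    have hmain : ∀ j ∈ Finset.range (N - 2), ‖vf ε j‖
        = ‖slopeVec x y (j + 1) - slopeVec x y j‖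
          - (if j = i₀ - 1 then ε else 0) - (if j = i₀ then ε else 0) := by
      intro j hj
      simp only [Finset.mem_range] at hj
      simp only [hvf, if_pos hj]
      by_cases e1 : j = i₀ - 1
      · have e2 : j ≠ i₀ := by omega
        rw [if_pos e1, if_neg e2, if_pos e1, if_neg e2, sub_zero, sub_zero]
        subst e1
        rw [show i₀ - 1 + 1 = i₀ from by omega]
        exact hkey _ ε h0 (by rw [← hn₁def]; exact hε1) (by rw [← hn₁def]; exact hδ1u)
      · by_cases e2 : j = i₀
        · rw [if_neg e1, if_pos e2, if_neg e1, if_pos e2, sub_zero, sub_zero]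
          subst e2
          exact hkey _ ε h0 (by rw [← hn₂def]; exact hε2) (by rw [← hn₂def]; exact hδ2u)
        · rw [if_neg e1, if_neg e2, if_neg e1, if_neg e2, sub_zero, sub_zero, sub_zero,
            sub_zero]
    rw [Finset.sum_congr rfl hmain, Finset.sum_sub_distrib, Finset.sum_sub_distrib,
      Finset.sum_ite_eq' (Finset.range (N - 2)) (i₀ - 1) (fun _ => ε),
      Finset.sum_ite_eq' (Finset.range (N - 2)) i₀ (fun _ => ε),
      if_pos (Finset.mem_range.mpr (by omega : i₀ - 1 < N - 2)),
      if_pos (Finset.mem_range.mpr (by omega : i₀ < N - 2))]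
    have hre : ∑ j ∈ Finset.range (N - 2), ‖slopeVec x y (j + 1) - slopeVec x y j‖
        = ∑ i ∈ Finset.Ico 1 ((N - 2) + 1), ‖slopeVec x y i - slopeVec x y (i - 1)‖ := by
      rw [sum_Ico_shift (fun i => ‖slopeVec x y i - slopeVec x y (i - 1)‖)]
      exact Finset.sum_congr rfl fun j _ => by simp only [Nat.add_sub_cancel]
    rw [hre, show (N - 2) + 1 = N - 1 from by omega]
    ring
  -- minimizers
  have hmin : ∀ ε : ℝ, 0 ≤ ε → ε ≤ ε₀ → IsMinimizer N x y (Θ ε) := by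
    intro ε h0 h1
    refine ⟨hinterp ε, fun θ' hθ' => ?_⟩
    rw [hcost ε h0 h1]
    exact cost_lower_bound (by omega) x y hx θ' hθ'
  -- injectivity
  set q : ℝ := (x i₀ + m) / 2 with hq
  have hq1 : x i₀ < q := by rw [hq]; linarith
  have hq2 : q < m := by rw [hq]; linarith
  have hq3 : q < x (i₀ + 1) := lt_trans hq2 hm2
  have hinj : Set.InjOn (fun ε : ℝ => nnFun (Θ ε)) (Set.Ioo 0 ε₀) := by
    intro a _ b _ hab
    have h1 := congrFun hab q
    simp only at h1
    rw [heval a q, heval b q,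
      max_eq_right (by linarith : q - m ≤ 0),
      max_eq_left (by linarith : (0:ℝ) ≤ q - x i₀),
      max_eq_right (by linarith : q - x (i₀ + 1) ≤ 0)] at h1
    have h2 := add_left_cancel h1
    have h3 : ((2 * a * 0 - a * (q - x i₀) - a * 0) - (2 * b * 0 - b * (q - x i₀) - b * 0)) • u
        = 0 := by rw [sub_smul, h2, sub_self]
    rcases smul_eq_zero.mp h3 with h4 | h4
    · have h5 : (b - a) * (q - x i₀) = 0 := by linarith [h4]; 
      rcases mul_eq_zero.mp h5 with h6 | h6
      · linarith
      · linarith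
    · exfalso
      have := hu
      rw [h4, norm_zero] at this
      norm_num at this
  -- conclusion
  have himg : (fun ε : ℝ => nnFun (Θ ε)) '' (Set.Ioo 0 ε₀) ⊆
      {f : ℝ → EuclideanSpace ℝ (Fin T) |
        ∃ θ : ReLUParams T K, IsMinimizer N x y θ ∧ f = nnFun θ} := by
    rintro f ⟨ε, hε, rfl⟩
    exact ⟨Θ ε, hmin ε hε.1.le hε.2.le, rfl⟩
  exact Set.Infinite.mono himg ((Set.Ioo_infinite hε₀).image hinj)


end
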